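/- arXiv:2206.11086 — 2 statements merged into one kernel-verified Lean document; each statement's English description precedes it below -/
import Mathlib

section
/- In the setup (no conservation law needed), for every state ρ on A: √𝔉_{ρ⊗ρ_B}(X_A⊗1_B − U†(X_{A'}⊗1_{B'})U) ≤ Δ_{X_A} + Δ_{X_{A'}}. -/
open scoped Kronecker
open Matrix
open scoped ComplexOrder Classical

noncomputable section

/-- Positive semidefinite square root of a matrix (junk value `0` if not PSD). -/
noncomputable def matSqrt {n : Type*} [Fintype n] [DecidableEq n]
    (A : Matrix n n ℂ) : Matrix n n ℂ :=
  if h : A.PosSemidef then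
    (h.1.eigenvectorUnitary : Matrix n n ℂ) *
      Matrix.diagonal (fun i => ((Real.sqrt (h.1.eigenvalues i) : ℝ) : ℂ)) *
      star (h.1.eigenvectorUnitary : Matrix n n ℂ)
  else 0

/-- A quantum state: a positive semidefinite matrix of unit trace. -/
def IsState {n : Type*} [Fintype n] [DecidableEq n] (ρ : Matrix n n ℂ) : Prop :=
  ρ.PosSemidef ∧ ρ.trace = 1

/-- Fidelity `F(ρ,σ) = Tr √(√σ ρ √σ)`. -/
noncomputable def fidelity {n : Type*} [Fintype n] [DecidableEq n]
    (ρ σ : Matrix n n ℂ) : ℝ :=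
  ((matSqrt (matSqrt σ * ρ * matSqrt σ)).trace).re

/-- Purified distance `D_F(ρ,σ) = √(1 − F(ρ,σ)²)`. -/
noncomputable def purifiedDist {n : Type*} [Fintype n] [DecidableEq n]
    (ρ σ : Matrix n n ℂ) : ℝ :=
  Real.sqrt (1 - (fidelity ρ σ) ^ 2)

/-- SLD quantum Fisher information
`𝔉_ρ(X) = 2 ∑_{i,j : λ_i+λ_j>0} ((λ_i−λ_j)²/(λ_i+λ_j)) |⟨i|X|j⟩|²`
(junk value `0` if `ρ` is not Hermitian). -/
noncomputable def qFisher {n : Type*} [Fintype n] [DecidableEq n]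
    (ρ X : Matrix n n ℂ) : ℝ :=
  if hρ : ρ.IsHermitian then
    2 * ∑ i, ∑ j,
      (if 0 < hρ.eigenvalues i + hρ.eigenvalues j then
        ((hρ.eigenvalues i - hρ.eigenvalues j) ^ 2 / (hρ.eigenvalues i + hρ.eigenvalues j)) *
          Complex.normSq (dotProduct (star ⇑(hρ.eigenvectorBasis i))
            (X *ᵥ ⇑(hρ.eigenvectorBasis j)))
      else 0)
  else 0

/-- Positive part of a Hermitian matrix (junk value `0` if not Hermitian). -/
noncomputable def matPosPart {n : Type*} [Fintype n] [DecidableEq n]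
    (W : Matrix n n ℂ) : Matrix n n ℂ :=
  if hW : W.IsHermitian then
    (hW.eigenvectorUnitary : Matrix n n ℂ) *
      Matrix.diagonal (fun i => ((max (hW.eigenvalues i) 0 : ℝ) : ℂ)) *
      star (hW.eigenvectorUnitary : Matrix n n ℂ)
  else 0

/-- Negative part of a Hermitian matrix (junk value `0` if not Hermitian). -/
noncomputable def matNegPart {n : Type*} [Fintype n] [DecidableEq n]
    (W : Matrix n n ℂ) : Matrix n n ℂ :=
  if hW : W.IsHermitian then
    (hW.eigenvectorUnitary : Matrix n n ℂ) *
      Matrix.diagonal (fun i => ((max (-hW.eigenvalues i) 0 : ℝ) : ℂ)) *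
      star (hW.eigenvectorUnitary : Matrix n n ℂ)
  else 0

/-- `Δ_W`: difference between the largest and smallest eigenvalues of a Hermitian matrix. -/
noncomputable def specSpread {n : Type*} [Fintype n] [DecidableEq n]
    (W : Matrix n n ℂ) : ℝ :=
  if hW : W.IsHermitian then (⨆ i, hW.eigenvalues i) - (⨅ i, hW.eigenvalues i) else 0

/-- Trace distance `T(ρ,σ) = ½(Tr (ρ−σ)₊ + Tr (ρ−σ)₋)`. -/
noncomputable def traceDist {n : Type*} [Fintype n] [DecidableEq n]
    (ρ σ : Matrix n n ℂ) : ℝ :=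
  (((matPosPart (ρ - σ)).trace).re + ((matNegPart (ρ - σ)).trace).re) / 2

/-- The dual (adjoint w.r.t. the trace pairing) of a linear map on matrices:
`Tr[(dualMap Φ W) ρ] = Tr[W Φ(ρ)]` for all `ρ` whenever `Φ` is linear. -/
noncomputable def dualMap {n m : Type*} [Fintype n] [DecidableEq n] [Fintype m] [DecidableEq m]
    (Φ : Matrix n n ℂ → Matrix m m ℂ) (W : Matrix m m ℂ) : Matrix n n ℂ :=
  Matrix.of fun i j => (W * Φ (Matrix.single j i 1)).trace

/-- Partial trace over the second tensor factor. -/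
def ptraceRight {α β : Type*} [Fintype β] (M : Matrix (α × β) (α × β) ℂ) : Matrix α α ℂ :=
  Matrix.of fun i j => ∑ k, M (i, k) (j, k)

/-- Partial trace over the first tensor factor. -/
def ptraceLeft {α β : Type*} [Fintype α] (M : Matrix (α × β) (α × β) ℂ) : Matrix β β ℂ :=
  Matrix.of fun i j => ∑ k, M (k, i) (k, j)

/-- A quantum channel: a map admitting a Kraus representation `{K_μ}` with
`∑_μ K_μ† K_μ = 1` (this entails complete positivity, trace preservation and linearity). -/
def IsCPTP {n m : Type*} [Fintype n] [DecidableEq n] [Fintype m] [DecidableEq m]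
    (Φ : Matrix n n ℂ → Matrix m m ℂ) : Prop :=
  ∃ (N : ℕ) (K : Fin N → Matrix m n ℂ),
    (∀ ρ, Φ ρ = ∑ μ, K μ * ρ * (K μ)ᴴ) ∧ (∑ μ, (K μ)ᴴ * K μ = 1)

/-- Tensor extension `Φ ⊗ id` of a map on matrices (correct for linear `Φ`). -/
noncomputable def tensorId {a b r : Type*} [Fintype a] [DecidableEq a]
    [Fintype b] [DecidableEq b] [Fintype r]
    (Φ : Matrix a a ℂ → Matrix b b ℂ)
    (M : Matrix (a × r) (a × r) ℂ) : Matrix (b × r) (b × r) ℂ :=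
  Matrix.of fun p q => Φ (Matrix.of fun i j => M (i, p.2) (j, q.2)) p.1 q.1

/-- Operator norm (ℓ²→ℓ²) of a matrix, as a supremum over unit vectors. -/
noncomputable def opNorm {n : Type*} [Fintype n] (M : Matrix n n ℂ) : ℝ :=
  sSup {x : ℝ | ∃ v : n → ℂ, (∑ i, Complex.normSq (v i)) = 1 ∧
    x = Real.sqrt (∑ i, Complex.normSq ((M *ᵥ v) i))}

end

open Matrix
open scoped ComplexOrder

namespace QFH

variable {n : Type*} [Fintype n] [DecidableEq n]

noncomputable def coord {A : Matrix n n ℂ} (hA : A.IsHermitian) (v : n → ℂ) (k : n) : ℂ :=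
  dotProduct (star ⇑(hA.eigenvectorBasis k)) v

lemma basis_dot {A : Matrix n n ℂ} (hA : A.IsHermitian) (i j : n) :
    dotProduct (star ⇑(hA.eigenvectorBasis i)) ⇑(hA.eigenvectorBasis j)
      = if i = j then 1 else 0 := by
  have h := hA.eigenvectorBasis.orthonormal
  rw [orthonormal_iff_ite] at h
  have h2 := h i j
  rwa [EuclideanSpace.inner_eq_star_dotProduct, dotProduct_comm] at h2

lemma coord_mulVec {A : Matrix n n ℂ} (hA : A.IsHermitian) (v : n → ℂ) (k : n) :
    coord hA (A *ᵥ v) k = (hA.eigenvalues k : ℂ) * coord hA v k := by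
  unfold coord
  rw [Matrix.dotProduct_mulVec]
  have h1 : star ⇑(hA.eigenvectorBasis k) ᵥ* A = star (A *ᵥ ⇑(hA.eigenvectorBasis k)) := by
    rw [Matrix.star_mulVec, hA.eq]
  rw [h1, hA.mulVec_eigenvectorBasis]
  rw [star_smul, smul_dotProduct]
  simp [Complex.real_smul, Complex.conj_ofReal]

lemma dot_eq_sum_coord {A : Matrix n n ℂ} (hA : A.IsHermitian) (v w : n → ℂ) :
    dotProduct (star v) w
      = ∑ k, (starRingEnd ℂ) (coord hA v k) * coord hA w k := by
  have h := hA.eigenvectorBasis.repr.inner_map_map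
    ((WithLp.equiv 2 (n → ℂ)).symm v) ((WithLp.equiv 2 (n → ℂ)).symm w)
  have h2 : star v ⬝ᵥ w
      = (inner ℂ ((WithLp.equiv 2 (n → ℂ)).symm v) ((WithLp.equiv 2 (n → ℂ)).symm w) : ℂ) := by
    rw [EuclideanSpace.inner_eq_star_dotProduct, dotProduct_comm]; rfl
  rw [h2, ← h]
  simp only [PiLp.inner_apply, RCLike.inner_apply]
  refine Finset.sum_congr rfl fun k _ => ?_
  unfold coord
  rw [OrthonormalBasis.repr_apply_apply, OrthonormalBasis.repr_apply_apply,
    EuclideanSpace.inner_eq_star_dotProduct, EuclideanSpace.inner_eq_star_dotProduct]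
  change (w ⬝ᵥ _) * (starRingEnd ℂ) (v ⬝ᵥ _) = _
  rw [dotProduct_comm w, dotProduct_comm v, mul_comm]

lemma normsq_eq {A : Matrix n n ℂ} (hA : A.IsHermitian) (v : n → ℂ) :
    dotProduct (star v) v
      = ((∑ k, Complex.normSq (coord hA v k) : ℝ) : ℂ) := by
  rw [dot_eq_sum_coord hA v v]
  push_cast
  refine Finset.sum_congr rfl fun k _ => ?_
  rw [Complex.normSq_eq_conj_mul_self]

lemma quad_eq {A : Matrix n n ℂ} (hA : A.IsHermitian) (v : n → ℂ) :
    dotProduct (star v) (A *ᵥ v)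
      = ((∑ k, hA.eigenvalues k * Complex.normSq (coord hA v k) : ℝ) : ℂ) := by
  rw [dot_eq_sum_coord hA v (A *ᵥ v)]
  push_cast
  refine Finset.sum_congr rfl fun k _ => ?_
  rw [coord_mulVec, Complex.normSq_eq_conj_mul_self]
  ring

lemma mulVec_normsq_eq {A : Matrix n n ℂ} (hA : A.IsHermitian) (v : n → ℂ) :
    dotProduct (star (A *ᵥ v)) (A *ᵥ v)
      = ((∑ k, (hA.eigenvalues k) ^ 2 * Complex.normSq (coord hA v k) : ℝ) : ℂ) := by
  rw [dot_eq_sum_coord hA (A *ᵥ v) (A *ᵥ v)]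
  push_cast
  refine Finset.sum_congr rfl fun k _ => ?_
  rw [coord_mulVec, _root_.map_mul, Complex.conj_ofReal, Complex.normSq_eq_conj_mul_self]
  ring

end QFH

open Matrix
open scoped ComplexOrder Kronecker

namespace QFH2

variable {n : Type*} [Fintype n] [DecidableEq n]

-- unitary conjugation quad form
lemma conj_quad (U N : Matrix n n ℂ) (w : n → ℂ) :
    star w ⬝ᵥ ((Uᴴ * N * U) *ᵥ w) = star (U *ᵥ w) ⬝ᵥ (N *ᵥ (U *ᵥ w)) := by
  rw [← Matrix.mulVec_mulVec, ← Matrix.mulVec_mulVec, Matrix.dotProduct_mulVec (star w) Uᴴ,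
    ← Matrix.star_mulVec]

lemma unitary_norm (U : Matrix n n ℂ) (hU : Uᴴ * U = 1) (w : n → ℂ) :
    star (U *ᵥ w) ⬝ᵥ (U *ᵥ w) = star w ⬝ᵥ w := by
  rw [Matrix.star_mulVec, ← Matrix.dotProduct_mulVec, Matrix.mulVec_mulVec, hU,
    Matrix.one_mulVec]

-- reindex quad form
lemma reindex_quad {p q : Type*} [Fintype p] [Fintype q] [DecidableEq p] [DecidableEq q]
    (f : p ≃ q) (N : Matrix q q ℂ) (u : p → ℂ) :
    star u ⬝ᵥ ((Matrix.reindex f.symm f.symm N) *ᵥ u)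
      = star (u ∘ ⇑f.symm) ⬝ᵥ (N *ᵥ (u ∘ ⇑f.symm)) := by
  rw [Matrix.reindex_apply, Equiv.symm_symm, Matrix.submatrix_mulVec_equiv]
  have h : star u = (star (u ∘ ⇑f.symm)) ∘ ⇑f := by
    funext x; simp
  rw [h, comp_equiv_dotProduct_comp_equiv]

lemma comp_norm {p q : Type*} [Fintype p] [Fintype q] (f : p ≃ q) (u : p → ℂ) :
    star (u ∘ ⇑f.symm) ⬝ᵥ (u ∘ ⇑f.symm) = star u ⬝ᵥ u := by
  have h : star (u ∘ ⇑f.symm) = (star u) ∘ ⇑f.symm := rfl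
  rw [h]
  exact comp_equiv_dotProduct_comp_equiv (x := star u) (y := u) f.symm

-- Kronecker with 1 : quadratic form decomposes into slices
variable {b : Type*} [Fintype b] [DecidableEq b]

lemma kron_quad (X : Matrix n n ℂ) (u : (n × b) → ℂ) :
    star u ⬝ᵥ ((X ⊗ₖ (1 : Matrix b b ℂ)) *ᵥ u)
      = ∑ j : b, star (fun a => u (a, j)) ⬝ᵥ (X *ᵥ (fun a => u (a, j))) := by
  simp only [dotProduct, Matrix.mulVec, Matrix.kroneckerMap_apply, Matrix.one_apply,
    Fintype.sum_prod_type, Pi.star_apply, mul_ite, mul_one, mul_zero, ite_mul, zero_mul,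
    Finset.sum_ite_eq', Finset.sum_ite_eq, Finset.mem_univ, if_true]
  rw [Finset.sum_comm]

lemma kron_norm (u : (n × b) → ℂ) :
    star u ⬝ᵥ u = ∑ j : b, star (fun a => u (a, j)) ⬝ᵥ (fun a => u (a, j)) := by
  simp only [dotProduct, Pi.star_apply, Fintype.sum_prod_type]
  rw [Finset.sum_comm]

-- Kronecker PSD and Hermitian
lemma kron_conjTranspose {m p q r : Type*} [Fintype m] [Fintype p] [Fintype q] [Fintype r]
    (A : Matrix m p ℂ) (B : Matrix q r ℂ) : (A ⊗ₖ B)ᴴ = Aᴴ ⊗ₖ Bᴴ := by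
  ext ⟨i, j⟩ ⟨k, l⟩
  simp [Matrix.conjTranspose_apply, Matrix.kroneckerMap_apply]

lemma kron_isHermitian {m p : Type*} [Fintype m] [Fintype p]
    {A : Matrix m m ℂ} {B : Matrix p p ℂ} (hA : A.IsHermitian) (hB : B.IsHermitian) :
    (A ⊗ₖ B).IsHermitian := by
  have : (A ⊗ₖ B)ᴴ = A ⊗ₖ B := by rw [kron_conjTranspose, hA.eq, hB.eq]
  exact this

lemma kron_posSemidef {m p : Type*} [Fintype m] [Fintype p] [DecidableEq m] [DecidableEq p]
    {A : Matrix m m ℂ} {B : Matrix p p ℂ} (hA : A.PosSemidef) (hB : B.PosSemidef) :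
    (A ⊗ₖ B).PosSemidef := by
  exact hA.kronecker hB

lemma conj_isHermitian {N U : Matrix n n ℂ} (hN : N.IsHermitian) :
    (Uᴴ * N * U).IsHermitian := by
  have : (Uᴴ * N * U)ᴴ = Uᴴ * N * U := by
    rw [Matrix.conjTranspose_mul, Matrix.conjTranspose_mul, Matrix.conjTranspose_conjTranspose,
      hN.eq, mul_assoc]
  exact this

-- sum of eigenvalues equals trace
lemma sum_eigenvalues_eq_trace {A : Matrix n n ℂ} (hA : A.IsHermitian) :
    ((∑ i, hA.eigenvalues i : ℝ) : ℂ) = A.trace := by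
  conv_rhs => rw [hA.spectral_theorem, Unitary.conjStarAlgAut_apply]
  rw [Matrix.trace_mul_cycle]
  rw [show (star (hA.eigenvectorUnitary : Matrix n n ℂ)) * (hA.eigenvectorUnitary : Matrix n n ℂ)
      = 1 from Unitary.coe_star_mul_self hA.eigenvectorUnitary]
  rw [one_mul, Matrix.trace_diagonal]
  push_cast
  rfl

end QFH2


section moreHelpers
open Matrix
open scoped ComplexOrder Kronecker
set_option linter.unusedSectionVars false

namespace QFH

variable {n : Type*} [Fintype n] [DecidableEq n]

lemma quad_le {A : Matrix n n ℂ} (hA : A.IsHermitian) {C : ℝ}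
    (hC : ∀ k, hA.eigenvalues k ≤ C) (v : n → ℂ) :
    (star v ⬝ᵥ (A *ᵥ v)).re ≤ C * (star v ⬝ᵥ v).re := by
  rw [quad_eq hA, normsq_eq hA, Complex.ofReal_re, Complex.ofReal_re, Finset.mul_sum]
  exact Finset.sum_le_sum fun k _ => mul_le_mul_of_nonneg_right (hC k) (Complex.normSq_nonneg _)

lemma le_quad {A : Matrix n n ℂ} (hA : A.IsHermitian) {m : ℝ}
    (hm : ∀ k, m ≤ hA.eigenvalues k) (v : n → ℂ) :
    m * (star v ⬝ᵥ v).re ≤ (star v ⬝ᵥ (A *ᵥ v)).re := by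
  rw [quad_eq hA, normsq_eq hA, Complex.ofReal_re, Complex.ofReal_re, Finset.mul_sum]
  exact Finset.sum_le_sum fun k _ => mul_le_mul_of_nonneg_right (hm k) (Complex.normSq_nonneg _)

lemma mulVec_normsq_le {A : Matrix n n ℂ} (hA : A.IsHermitian) {r : ℝ}
    (hr : ∀ k, |hA.eigenvalues k| ≤ r) (v : n → ℂ) :
    (star (A *ᵥ v) ⬝ᵥ (A *ᵥ v)).re ≤ r ^ 2 * (star v ⬝ᵥ v).re := by
  rw [mulVec_normsq_eq hA, normsq_eq hA, Complex.ofReal_re, Complex.ofReal_re, Finset.mul_sum]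
  refine Finset.sum_le_sum fun k _ => mul_le_mul_of_nonneg_right ?_ (Complex.normSq_nonneg _)
  calc hA.eigenvalues k ^ 2 = |hA.eigenvalues k| ^ 2 := (sq_abs _).symm
    _ ≤ r ^ 2 := pow_le_pow_left₀ (abs_nonneg _) (hr k) 2

lemma eig_eq_quad {A : Matrix n n ℂ} (hA : A.IsHermitian) (i : n) :
    hA.eigenvalues i
      = (star ⇑(hA.eigenvectorBasis i) ⬝ᵥ (A *ᵥ ⇑(hA.eigenvectorBasis i))).re := by
  simpa using hA.eigenvalues_eq i

lemma qFisher_sub_smul_one {ρ : Matrix n n ℂ} (hρ : ρ.IsHermitian) (X : Matrix n n ℂ) (c : ℝ) :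
    qFisher ρ (X - (c : ℂ) • (1 : Matrix n n ℂ)) = qFisher ρ X := by
  unfold qFisher
  rw [dif_pos hρ, dif_pos hρ]
  congr 1
  refine Finset.sum_congr rfl fun i _ => Finset.sum_congr rfl fun j _ => ?_
  by_cases hij : i = j
  · subst hij; simp
  · have hd : dotProduct (star ⇑(hρ.eigenvectorBasis i))
        ((X - (c : ℂ) • (1 : Matrix n n ℂ)) *ᵥ ⇑(hρ.eigenvectorBasis j))
        = dotProduct (star ⇑(hρ.eigenvectorBasis i)) (X *ᵥ ⇑(hρ.eigenvectorBasis j)) := by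
      rw [Matrix.sub_mulVec, dotProduct_sub, Matrix.smul_mulVec, Matrix.one_mulVec,
        dotProduct_smul, basis_dot, if_neg hij]
      simp
    rw [hd]

lemma qFisher_le {ρ X : Matrix n n ℂ} (hρ : ρ.PosSemidef) (htr : ∑ i, hρ.1.eigenvalues i = 1)
    (hX : X.IsHermitian) {r : ℝ}
    (hXb : ∀ v : n → ℂ, (star (X *ᵥ v) ⬝ᵥ (X *ᵥ v)).re ≤ r ^ 2 * (star v ⬝ᵥ v).re) :
    qFisher ρ X ≤ 4 * r ^ 2 := by
  unfold qFisher
  rw [dif_pos hρ.1]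
  set lam := hρ.1.eigenvalues with hlamdef
  set B := hρ.1.eigenvectorBasis with hBdef
  have hlam : ∀ i, 0 ≤ lam i := hρ.eigenvalues_nonneg
  have hb1 : ∀ i : n, (star ⇑(B i) ⬝ᵥ ⇑(B i)) = 1 := fun i => by
    rw [hBdef, basis_dot hρ.1 i i]; simp
  set ns : n → n → ℝ :=
    fun i j => Complex.normSq (star ⇑(B i) ⬝ᵥ (X *ᵥ ⇑(B j))) with hns
  set g : n → ℝ := fun j => (star (X *ᵥ ⇑(B j)) ⬝ᵥ (X *ᵥ ⇑(B j))).re with hg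
  have hsym : ∀ i j, ns i j = ns j i := by
    intro i j
    have h1 : star ⇑(B i) ⬝ᵥ (X *ᵥ ⇑(B j))
        = starRingEnd ℂ (star ⇑(B j) ⬝ᵥ (X *ᵥ ⇑(B i))) := by
      have h2 : starRingEnd ℂ (star ⇑(B j) ⬝ᵥ (X *ᵥ ⇑(B i)))
          = star (X *ᵥ ⇑(B i)) ⬝ᵥ ⇑(B j) := by
        rw [Matrix.star_dotProduct, starRingEnd_apply, star_star]
      rw [h2, Matrix.star_mulVec, hX.eq, ← Matrix.dotProduct_mulVec]
    rw [hns]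
    simp only []
    rw [h1, Complex.normSq_conj]
  have hrow : ∀ j, ∑ i, ns i j = g j := by
    intro j
    have h := normsq_eq hρ.1 (X *ᵥ ⇑(B j))
    have : g j = ∑ k, Complex.normSq (coord hρ.1 (X *ᵥ ⇑(B j)) k) := by
      rw [hg]; simp only []; rw [h, Complex.ofReal_re]
    rw [this]
    exact Finset.sum_congr rfl fun i _ => rfl
  have hgle : ∀ j, g j ≤ r ^ 2 := by
    intro j
    have := hXb ⇑(B j)
    rwa [hb1 j, Complex.one_re, mul_one] at this
  have hg0 : ∀ j, 0 ≤ g j := by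
    intro j
    rw [← hrow j]
    exact Finset.sum_nonneg fun i _ => Complex.normSq_nonneg _
  have step1 : 2 * (∑ i, ∑ j,
      (if 0 < lam i + lam j then
        ((lam i - lam j) ^ 2 / (lam i + lam j)) *
          Complex.normSq (dotProduct (star ⇑(B i)) (X *ᵥ ⇑(B j)))
      else 0))
      ≤ 2 * (∑ i, ∑ j, (lam i + lam j) * ns i j) := by
    refine mul_le_mul_of_nonneg_left
      (Finset.sum_le_sum fun i _ => Finset.sum_le_sum fun j _ => ?_) (by norm_num)
    by_cases h : 0 < lam i + lam j
    · rw [if_pos h]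
      refine mul_le_mul_of_nonneg_right ?_ (Complex.normSq_nonneg _)
      rw [div_le_iff₀ h]
      nlinarith [hlam i, hlam j]
    · rw [if_neg h]
      exact mul_nonneg (add_nonneg (hlam i) (hlam j)) (Complex.normSq_nonneg _)
  have step2 : ∑ i, ∑ j, (lam i + lam j) * ns i j
      = ∑ i, lam i * g i + ∑ j, lam j * g j := by
    have h1 : ∀ i j, (lam i + lam j) * ns i j = lam i * ns i j + lam j * ns i j :=
      fun i j => by ring
    simp only [h1, Finset.sum_add_distrib]
    congr 1
    · refine Finset.sum_congr rfl fun i _ => ?_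
      rw [← Finset.mul_sum]
      congr 1
      rw [Finset.sum_congr rfl fun j _ => hsym i j]
      exact hrow i
    · rw [Finset.sum_comm]
      refine Finset.sum_congr rfl fun j _ => ?_
      rw [← Finset.mul_sum, hrow j]
  have step3 : ∑ i, lam i * g i ≤ r ^ 2 := by
    calc ∑ i, lam i * g i ≤ ∑ i, lam i * r ^ 2 :=
          Finset.sum_le_sum fun i _ => mul_le_mul_of_nonneg_left (hgle i) (hlam i)
      _ = (∑ i, lam i) * r ^ 2 := by rw [Finset.sum_mul]
      _ = r ^ 2 := by rw [htr, one_mul]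
  calc 2 * (∑ i, ∑ j,
      (if 0 < lam i + lam j then
        ((lam i - lam j) ^ 2 / (lam i + lam j)) *
          Complex.normSq (dotProduct (star ⇑(B i)) (X *ᵥ ⇑(B j)))
      else 0)) ≤ 2 * (∑ i, ∑ j, (lam i + lam j) * ns i j) := step1
    _ = 2 * (∑ i, lam i * g i + ∑ j, lam j * g j) := by rw [step2]
    _ ≤ 2 * (r ^ 2 + r ^ 2) := by
        have := step3
        nlinarith [step3]
    _ = 4 * r ^ 2 := by ring

end QFH

namespace QFH2

open QFH

variable {n : Type*} [Fintype n] [DecidableEq n] {b : Type*} [Fintype b] [DecidableEq b]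

lemma kron_quad_bounds {X : Matrix n n ℂ} (hX : X.IsHermitian) {m M : ℝ}
    (hm : ∀ k, m ≤ hX.eigenvalues k) (hM : ∀ k, hX.eigenvalues k ≤ M)
    (u : (n × b) → ℂ) :
    m * (star u ⬝ᵥ u).re ≤ (star u ⬝ᵥ ((X ⊗ₖ (1 : Matrix b b ℂ)) *ᵥ u)).re ∧
      (star u ⬝ᵥ ((X ⊗ₖ (1 : Matrix b b ℂ)) *ᵥ u)).re ≤ M * (star u ⬝ᵥ u).re := by
  rw [kron_quad, kron_norm (u := u), Complex.re_sum, Complex.re_sum, Finset.mul_sum,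
    Finset.mul_sum]
  constructor
  · exact Finset.sum_le_sum fun j _ => le_quad hX hm _
  · exact Finset.sum_le_sum fun j _ => quad_le hX hM _

end QFH2

end moreHelpers


open QFH QFH2 in
/-- upper bound `Δ ≤ Δ_{X_A} + Δ_{X_{A'}}`. -/
theorem statement_7
    {dA dB dA' dB' : Type*} [Fintype dA] [DecidableEq dA] [Fintype dB] [DecidableEq dB]
    [Fintype dA'] [DecidableEq dA'] [Fintype dB'] [DecidableEq dB']
    (e : dA × dB ≃ dA' × dB')
    (U : Matrix (dA × dB) (dA × dB) ℂ) (hU : U * Uᴴ = 1 ∧ Uᴴ * U = 1)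
    (ρB : Matrix dB dB ℂ) (hρB : IsState ρB)
    (XA : Matrix dA dA ℂ) (hXA : XA.IsHermitian)
    (XA' : Matrix dA' dA' ℂ) (hXA' : XA'.IsHermitian)
    (ρ : Matrix dA dA ℂ) (hρ : IsState ρ) :
    Real.sqrt (qFisher (ρ ⊗ₖ ρB)
        (XA ⊗ₖ (1 : Matrix dB dB ℂ)
          - Uᴴ * (Matrix.reindex e.symm e.symm (XA' ⊗ₖ (1 : Matrix dB' dB' ℂ))) * U))
      ≤ specSpread XA + specSpread XA' := by
  classical
  -- nonemptiness
  have hAne : Nonempty dA := by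
    by_contra h
    rw [not_nonempty_iff] at h
    have h0 : ρ.trace = 0 := by simp [Matrix.trace]
    have h1 := hρ.2
    rw [h0] at h1
    exact one_ne_zero h1.symm
  have hA'ne : Nonempty dA' := by
    have : Nonempty dB := by
      by_contra h
      rw [not_nonempty_iff] at h
      have h0 : ρB.trace = 0 := by simp [Matrix.trace]
      have h1 := hρB.2
      rw [h0] at h1
      exact one_ne_zero h1.symm
    exact ⟨(e (Classical.arbitrary _)).1⟩
  -- notation
  set Y := Matrix.reindex e.symm e.symm (XA' ⊗ₖ (1 : Matrix dB' dB' ℂ)) with hYdef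
  set M := XA ⊗ₖ (1 : Matrix dB dB ℂ) - Uᴴ * Y * U with hMdef
  have hK : (XA ⊗ₖ (1 : Matrix dB dB ℂ)).IsHermitian :=
    kron_isHermitian hXA Matrix.isHermitian_one
  have hK' : (XA' ⊗ₖ (1 : Matrix dB' dB' ℂ)).IsHermitian :=
    kron_isHermitian hXA' Matrix.isHermitian_one
  have hY : Y.IsHermitian := by
    rw [hYdef, Matrix.reindex_apply]
    exact hK'.submatrix _
  have hM : M.IsHermitian := hK.sub (conj_isHermitian hY)
  -- spectral bounds
  set mA := ⨅ i, hXA.eigenvalues i with hmAdef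
  set MA := ⨆ i, hXA.eigenvalues i with hMAdef
  set mA' := ⨅ i, hXA'.eigenvalues i with hmA'def
  set MA' := ⨆ i, hXA'.eigenvalues i with hMA'def
  have hmA : ∀ k, mA ≤ hXA.eigenvalues k := fun k => ciInf_le (Finite.bddBelow_range _) k
  have hMA : ∀ k, hXA.eigenvalues k ≤ MA := fun k => le_ciSup (Finite.bddAbove_range _) k
  have hmA' : ∀ k, mA' ≤ hXA'.eigenvalues k := fun k => ciInf_le (Finite.bddBelow_range _) k
  have hMA' : ∀ k, hXA'.eigenvalues k ≤ MA' := fun k => le_ciSup (Finite.bddAbove_range _) k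
  have hsA : specSpread XA = MA - mA := by unfold specSpread; rw [dif_pos hXA]
  have hsA' : specSpread XA' = MA' - mA' := by unfold specSpread; rw [dif_pos hXA']
  have h0A : 0 ≤ MA - mA :=
    sub_nonneg.2 ((hmA (Classical.arbitrary dA)).trans (hMA _))
  have h0A' : 0 ≤ MA' - mA' :=
    sub_nonneg.2 ((hmA' (Classical.arbitrary dA')).trans (hMA' _))
  set c : ℝ := ((MA + mA) - (MA' + mA')) / 2 with hcdef
  set r : ℝ := ((MA - mA) + (MA' - mA')) / 2 with hrdef
  have hr0 : 0 ≤ r := by rw [hrdef]; linarith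
  -- the state
  have hρ' : (ρ ⊗ₖ ρB).PosSemidef := kron_posSemidef hρ.1 hρB.1
  have htr' : ∑ i, hρ'.1.eigenvalues i = 1 := by
    have h := sum_eigenvalues_eq_trace hρ'.1
    rw [Matrix.trace_kronecker, hρ.2, hρB.2, mul_one] at h
    exact_mod_cast h
  -- key quadratic-form bound for M
  have keybound : ∀ w : (dA × dB) → ℂ, star w ⬝ᵥ w = 1 →
      |(star w ⬝ᵥ (M *ᵥ w)).re - c| ≤ r := by
    intro w hw
    have hw1 : (star w ⬝ᵥ w).re = 1 := by rw [hw]; exact Complex.one_re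
    rw [hMdef, Matrix.sub_mulVec, dotProduct_sub, Complex.sub_re]
    have hQ1 := kron_quad_bounds hXA hmA hMA w
    rw [hw1, mul_one, mul_one] at hQ1
    -- second quadratic form
    have hQ2eq : (star w ⬝ᵥ ((Uᴴ * Y * U) *ᵥ w)).re
        = (star ((U *ᵥ w) ∘ ⇑e.symm) ⬝ᵥ
            ((XA' ⊗ₖ (1 : Matrix dB' dB' ℂ)) *ᵥ ((U *ᵥ w) ∘ ⇑e.symm))).re := by
      rw [conj_quad, hYdef, reindex_quad]
    have hn2 : (star ((U *ᵥ w) ∘ ⇑e.symm) ⬝ᵥ ((U *ᵥ w) ∘ ⇑e.symm)).re = 1 := by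
      rw [comp_norm, unitary_norm U hU.2, hw1]
    have hQ2 := kron_quad_bounds hXA' hmA' hMA' ((U *ᵥ w) ∘ ⇑e.symm)
    rw [hn2, mul_one, mul_one] at hQ2
    rw [hQ2eq]
    rw [abs_le]
    constructor
    · rw [hcdef, hrdef]; linarith [hQ1.1, hQ2.2]
    · rw [hcdef, hrdef]; linarith [hQ1.2, hQ2.1]
  -- shifted operator
  set M' := M - (c : ℂ) • (1 : Matrix (dA × dB) (dA × dB) ℂ) with hM'def
  have hsmul : ((c : ℂ) • (1 : Matrix (dA × dB) (dA × dB) ℂ)).IsHermitian := by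
    have : ((c : ℂ) • (1 : Matrix (dA × dB) (dA × dB) ℂ))ᴴ
        = (c : ℂ) • (1 : Matrix (dA × dB) (dA × dB) ℂ) := by
      rw [Matrix.conjTranspose_smul, Matrix.conjTranspose_one]
      simp [Complex.conj_ofReal]
    exact this
  have hM' : M'.IsHermitian := hM.sub hsmul
  have heig : ∀ k, |hM'.eigenvalues k| ≤ r := by
    intro k
    rw [eig_eq_quad hM' k]
    set w := ⇑(hM'.eigenvectorBasis k) with hwdef
    have hw : star w ⬝ᵥ w = 1 := by rw [hwdef, basis_dot hM' k k]; simp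
    have hshift : (star w ⬝ᵥ (M' *ᵥ w)).re = (star w ⬝ᵥ (M *ᵥ w)).re - c := by
      rw [hM'def, Matrix.sub_mulVec, dotProduct_sub, Matrix.smul_mulVec,
        Matrix.one_mulVec, dotProduct_smul, hw, smul_eq_mul, mul_one,
        Complex.sub_re, Complex.ofReal_re]
    rw [hshift]
    exact keybound w hw
  have hXb : ∀ v : (dA × dB) → ℂ,
      (star (M' *ᵥ v) ⬝ᵥ (M' *ᵥ v)).re ≤ r ^ 2 * (star v ⬝ᵥ v).re :=
    fun v => mulVec_normsq_le hM' heig v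
  have hfish : qFisher (ρ ⊗ₖ ρB) M ≤ 4 * r ^ 2 := by
    rw [← qFisher_sub_smul_one hρ'.1 M c]
    exact qFisher_le hρ' htr' hM' hXb
  calc Real.sqrt (qFisher (ρ ⊗ₖ ρB) M) ≤ Real.sqrt ((2 * r) ^ 2) := by
        apply Real.sqrt_le_sqrt
        nlinarith [hfish]
    _ = 2 * r := Real.sqrt_sq (by linarith)
    _ = specSpread XA + specSpread XA' := by rw [hsA, hsA', hrdef]; ring
end

section
/- Let {ρ_j}_{j∈J} and {σ_j}_{j∈J} be finite families of states on a finite-dimensional system S, let {q_j} be a probability distribution, and let {|j⟩}_{j∈J} be an orthonormal basis of an auxiliary system. Then D_F(∑_j q_j ρ_j⊗|j⟩⟨j|, ∑_j q_j σ_j⊗|j⟩⟨j|)² ≥ ∑_j q_j D_F(ρ_j, σ_j)². -/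
open scoped Kronecker
open Matrix
open scoped ComplexOrder Classical

section helpers
set_option linter.unusedSectionVars false
set_option maxHeartbeats 1000000
noncomputable section
variable {n : Type*} [Fintype n] [DecidableEq n] {ι : Type*} [Fintype ι]
  {d : Type*} [Fintype d] [DecidableEq d] {J : Type*} [Fintype J] [DecidableEq J]

/-- The PSD square root via the spectral decomposition (replacement for the removed API). -/
noncomputable def Matrix.PosSemidef.sqrt {A : Matrix n n ℂ} (h : A.PosSemidef) : Matrix n n ℂ :=
  (h.1.eigenvectorUnitary : Matrix n n ℂ) *
    Matrix.diagonal (fun i => ((Real.sqrt (h.1.eigenvalues i) : ℝ) : ℂ)) *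
    star (h.1.eigenvectorUnitary : Matrix n n ℂ)

open scoped MatrixOrder in
lemma Matrix.PosSemidef.sqrt_eq_cfc {A : Matrix n n ℂ} (h : A.PosSemidef) :
    h.sqrt = CFC.sqrt A := by
  rw [CFC.sqrt_eq_cfc, cfc_nnreal_eq_real _ A, h.1.cfc_eq]
  simp only [IsHermitian.cfc, Unitary.conjStarAlgAut_apply, Matrix.PosSemidef.sqrt]
  congr 2
  refine congrArg diagonal (funext fun i => ?_)
  simp [max_eq_left (h.eigenvalues_nonneg i)]

open scoped MatrixOrder in
lemma Matrix.PosSemidef.posSemidef_sqrt {A : Matrix n n ℂ} (h : A.PosSemidef) :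
    h.sqrt.PosSemidef := by
  rw [h.sqrt_eq_cfc]; exact Matrix.nonneg_iff_posSemidef.mp (CFC.sqrt_nonneg A)

open scoped MatrixOrder in
lemma Matrix.PosSemidef.sqrt_mul_self {A : Matrix n n ℂ} (h : A.PosSemidef) :
    h.sqrt * h.sqrt = A := by
  rw [h.sqrt_eq_cfc]; exact CFC.sqrt_mul_sqrt_self A h.nonneg

open scoped MatrixOrder in
lemma Matrix.PosSemidef.eq_sqrt_of_sq_eq {A B : Matrix n n ℂ} (hA : A.PosSemidef)
    (hB : B.PosSemidef) (hAB : A ^ 2 = B) : A = hB.sqrt := by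
  rw [hB.sqrt_eq_cfc]
  exact (CFC.sqrt_unique (by rw [← sq]; exact hAB) hA.nonneg).symm

lemma trace_psd_sqrt {M : Matrix n n ℂ} (hM : M.PosSemidef) :
    hM.sqrt.trace = ∑ i, (Real.sqrt (hM.1.eigenvalues i) : ℂ) := by
  rw [Matrix.PosSemidef.sqrt, Matrix.trace_mul_cycle,
    Matrix.mem_unitaryGroup_iff'.mp hM.1.eigenvectorUnitary.2, one_mul, trace_diagonal]

lemma trace_psd_re_nonneg {M : Matrix n n ℂ} (hM : M.PosSemidef) : 0 ≤ hM.sqrt.trace.re := by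
  rw [trace_psd_sqrt hM]
  simp only [Complex.re_sum, Complex.ofReal_re]
  exact Finset.sum_nonneg fun i _ => Real.sqrt_nonneg _


lemma cs_dot (x y : ι → ℂ) :
    (dotProduct (star x) y).re ≤
      Real.sqrt ((dotProduct (star x) x).re) *
      Real.sqrt ((dotProduct (star y) y).re) := by
  have h1 : inner ℂ (WithLp.toLp 2 x) (WithLp.toLp 2 y) = dotProduct (star x) y := by
    rw [EuclideanSpace.inner_toLp_toLp, dotProduct_comm]
  have hx : inner ℂ (WithLp.toLp 2 x) (WithLp.toLp 2 x) = dotProduct (star x) x := by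
    rw [EuclideanSpace.inner_toLp_toLp, dotProduct_comm]
  have hy : inner ℂ (WithLp.toLp 2 y) (WithLp.toLp 2 y) = dotProduct (star y) y := by
    rw [EuclideanSpace.inner_toLp_toLp, dotProduct_comm]
  set x' := WithLp.toLp 2 x
  set y' := WithLp.toLp 2 y
  have hxx : (dotProduct (star x) x).re = ‖x'‖ ^ 2 := by
    rw [← hx, @inner_self_eq_norm_sq_to_K ℂ]; norm_cast
  have hyy : (dotProduct (star y) y).re = ‖y'‖ ^ 2 := by
    rw [← hy, @inner_self_eq_norm_sq_to_K ℂ]; norm_cast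
  rw [hxx, hyy, Real.sqrt_sq (norm_nonneg _), Real.sqrt_sq (norm_nonneg _), ← h1]
  calc (inner ℂ x' y').re ≤ ‖inner ℂ x' y'‖ := Complex.re_le_norm _
    _ ≤ ‖x'‖ * ‖y'‖ := norm_inner_le_norm x' y'


lemma dot_shift (A B : Matrix n n ℂ) (x y : n → ℂ) :
    dotProduct (star (A *ᵥ x)) (B *ᵥ y)
      = dotProduct (star x) ((Aᴴ * B) *ᵥ y) := by
  rw [star_mulVec, dotProduct_mulVec, vecMul_vecMul, ← dotProduct_mulVec]

lemma vecMulVec_mul_vecMulVec (a b c d : n → ℂ) :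
    vecMulVec a (star b) * vecMulVec c (star d)
      = (dotProduct (star b) c) • vecMulVec a (star d) := by
  ext x z
  simp only [mul_apply, vecMulVec_apply, Matrix.smul_apply, dotProduct, smul_eq_mul,
    Finset.sum_mul, Pi.star_apply]
  congr 1; ext yy
  ring

lemma trace_mul_vecMulVec (X : Matrix n n ℂ) (y : n → ℂ) :
    (X * vecMulVec y (star y)).trace = dotProduct (star y) (X *ᵥ y) := by
  simp only [Matrix.trace, Matrix.diag, mul_apply, vecMulVec_apply, dotProduct,
    mulVec, Pi.star_apply]
  congr 1; ext a
  simp only [dotProduct, Finset.mul_sum]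
  congr 1; ext b
  ring

lemma trace_conjTranspose_mul_self_re_nonneg (B : Matrix n n ℂ) :
    0 ≤ ((Bᴴ * B).trace).re := by
  simp only [Matrix.trace, Matrix.diag, mul_apply, conjTranspose_apply, Complex.re_sum]
  refine Finset.sum_nonneg fun k _ => Finset.sum_nonneg fun l _ => ?_
  have : (star (B l k) * B l k) = (Complex.normSq (B l k) : ℂ) := by
    rw [Complex.normSq_eq_conj_mul_self]; rfl
  rw [this]
  simpa using Complex.normSq_nonneg _
lemma matSqrt_eq {A : Matrix n n ℂ} (h : A.PosSemidef) : matSqrt A = h.sqrt := dif_pos h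

lemma matSqrt_posSemidef {A : Matrix n n ℂ} (h : A.PosSemidef) : (matSqrt A).PosSemidef := by
  rw [matSqrt_eq h]; exact h.posSemidef_sqrt

lemma matSqrt_herm {A : Matrix n n ℂ} (h : A.PosSemidef) : (matSqrt A)ᴴ = matSqrt A :=
  (matSqrt_posSemidef h).1

lemma matSqrt_mul_self {A : Matrix n n ℂ} (h : A.PosSemidef) : matSqrt A * matSqrt A = A := by
  rw [matSqrt_eq h]; exact h.sqrt_mul_self

lemma psd_sandwich {A : Matrix n n ℂ} (h : A.PosSemidef) (B : Matrix n n ℂ)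
    (hB : Bᴴ = B) : (B * A * B).PosSemidef := by
  have := h.mul_mul_conjTranspose_same B
  rwa [hB] at this

lemma fid_trace {ρ σ : Matrix n n ℂ} (hρ : ρ.PosSemidef) (hσ : σ.PosSemidef) :
    ∃ hM : (matSqrt σ * ρ * matSqrt σ).PosSemidef,
      fidelity ρ σ = (hM.sqrt.trace).re := by
  have hM : (matSqrt σ * ρ * matSqrt σ).PosSemidef :=
    psd_sandwich hρ _ (matSqrt_herm hσ)
  exact ⟨hM, by rw [fidelity, matSqrt_eq hM]⟩

lemma fidelity_nonneg {ρ σ : Matrix n n ℂ} (hρ : ρ.PosSemidef) (hσ : σ.PosSemidef) :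
    0 ≤ fidelity ρ σ := by
  obtain ⟨hM, h⟩ := fid_trace hρ hσ
  rw [h]; exact trace_psd_re_nonneg hM

lemma fidelity_le_one {ρ σ : Matrix n n ℂ} (hρ : IsState ρ) (hσ : IsState σ) :
    fidelity ρ σ ≤ 1 := by
  obtain ⟨hM, hfid⟩ := fid_trace hρ.1 hσ.1
  set S := matSqrt σ with hSdef
  set R := matSqrt ρ with hRdef
  set M := S * ρ * S with hMdef
  set N := R * S with hNdef
  have hRH : Rᴴ = R := matSqrt_herm hρ.1
  have hSH : Sᴴ = S := matSqrt_herm hσ.1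
  have hRR : R * R = ρ := matSqrt_mul_self hρ.1
  have hSS : S * S = σ := matSqrt_mul_self hσ.1
  have hNN : Nᴴ * N = M := by
    rw [hNdef, conjTranspose_mul, hRH, hSH, hMdef]
    rw [mul_assoc, ← mul_assoc R R S, hRR, ← mul_assoc]
  set lam := hM.1.eigenvalues with hlamdef
  have hlam0 : ∀ i, 0 ≤ lam i := hM.eigenvalues_nonneg
  set u : n → (n → ℂ) := fun i => ⇑(hM.1.eigenvectorBasis i) with hu
  -- orthogonality of the images N u_i
  have key : ∀ i j, dotProduct (star (N *ᵥ u i)) (N *ᵥ u j)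
      = if i = j then (lam j : ℂ) else 0 := by
    intro i j
    rw [dot_shift, hNN]
    have hmv : M *ᵥ u j = (lam j : ℝ) • u j := hM.1.mulVec_eigenvectorBasis j
    rw [hmv]
    have horth := hM.1.eigenvectorBasis.orthonormal
    rw [orthonormal_iff_ite] at horth
    have hon : dotProduct (star (u i)) (u j) = if i = j then 1 else 0 := by
      have := horth i j
      rw [EuclideanSpace.inner_eq_star_dotProduct] at this
      rw [dotProduct_comm]; exact this
    rw [dotProduct_smul, hon]
    split <;> simp [Complex.real_smul]
  -- completeness of the eigenbasis
  have hcomp : ∀ a b, (∑ i, u i a * star (u i b)) = if a = b then (1:ℂ) else 0 := by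
    intro a b
    have h1 : (hM.1.eigenvectorUnitary : Matrix n n ℂ)
        * star (hM.1.eigenvectorUnitary : Matrix n n ℂ) = 1 :=
      mem_unitaryGroup_iff.mp hM.1.eigenvectorUnitary.2
    have h2 := congrFun (congrFun h1 a) b
    simpa [mul_apply, Matrix.IsHermitian.eigenvectorUnitary_apply, one_apply,
      conjTranspose_apply] using h2
  -- trace via the eigenbasis
  have htr : ∀ X : Matrix n n ℂ,
      (∑ i, dotProduct (star (u i)) (X *ᵥ u i)) = X.trace := by
    intro X
    have step : ∀ i, dotProduct (star (u i)) (X *ᵥ u i)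
        = ∑ a, ∑ b, X a b * (u i b * star (u i a)) := by
      intro i
      simp only [dotProduct, mulVec, Pi.star_apply, Finset.mul_sum]
      refine Finset.sum_congr rfl fun a _ => ?_
      refine Finset.sum_congr rfl fun b _ => ?_
      ring
    simp only [step]
    rw [Finset.sum_comm]
    have : ∀ a, ∑ i, ∑ b, X a b * (u i b * star (u i a))
        = ∑ b, X a b * ∑ i, (u i b * star (u i a)) := by
      intro a
      rw [Finset.sum_comm]
      exact Finset.sum_congr rfl fun b _ => by rw [Finset.mul_sum]
    simp only [this, hcomp]
    simp [Matrix.trace, Matrix.diag]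
  set w : n → (n → ℂ) := fun i => N *ᵥ u i with hwdef
  set y : n → (n → ℂ) := fun i => (((Real.sqrt (lam i))⁻¹ : ℝ) : ℂ) • w i with hydef
  have hw0 : ∀ i, lam i = 0 → w i = 0 := by
    intro i h0
    have hk := key i i
    rw [if_pos rfl, h0] at hk
    exact dotProduct_star_self_eq_zero.mp (by exact_mod_cast hk)
  have hstary : ∀ i, star (y i) = (((Real.sqrt (lam i))⁻¹ : ℝ) : ℂ) • star (w i) := by
    intro i
    simp [hydef, star_smul, Complex.conj_ofReal]
  have hyw : ∀ i, dotProduct (star (y i)) (w i) = (Real.sqrt (lam i) : ℂ) := by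
    intro i
    by_cases h0 : lam i = 0
    · simp [hstary, hw0 i h0, h0]
    · rw [hstary, smul_dotProduct, key i i, if_pos rfl]
      have hpos : 0 < lam i := lt_of_le_of_ne (hlam0 i) (Ne.symm h0)
      have hs : Real.sqrt (lam i) ≠ 0 := by positivity
      rw [smul_eq_mul]
      have hll : ((lam i : ℂ)) = (Real.sqrt (lam i) : ℂ) * (Real.sqrt (lam i) : ℂ) := by
        rw [← Complex.ofReal_mul, Real.mul_self_sqrt (hlam0 i)]
      rw [hll, ← mul_assoc, ← Complex.ofReal_mul, inv_mul_cancel₀ hs]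
      simp
  have hyy : ∀ i j, dotProduct (star (y i)) (y j)
      = if i = j then (if lam i = 0 then 0 else 1) else 0 := by
    intro i j
    rw [hstary, hydef]
    simp only [smul_dotProduct, dotProduct_smul, (show dotProduct (star (w i)) (w j) = _ from key i j)]
    by_cases hij : i = j
    · subst hij
      by_cases h0 : lam i = 0
      · simp [h0]
      · have hpos : 0 < lam i := lt_of_le_of_ne (hlam0 i) (Ne.symm h0)
        have hs : Real.sqrt (lam i) ≠ 0 := by positivity
        simp only [if_pos rfl, if_neg h0, smul_eq_mul]
        norm_cast
        field_simp
        norm_cast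
        have hl : (lam i : ℂ) ≠ 0 := by exact_mod_cast h0
        simp only [if_true]
        rw [div_pow, one_pow, Real.sq_sqrt (hlam0 i)]
        push_cast
        field_simp
    · simp [hij]
  set Q : Matrix n n ℂ := ∑ i, vecMulVec (y i) (star (y i)) with hQdef
  have hy0 : ∀ i, lam i = 0 → y i = 0 := by
    intro i h0; rw [hydef]; simp [hw0 i h0]
  have hQH : Qᴴ = Q := by
    rw [hQdef, conjTranspose_sum]
    refine Finset.sum_congr rfl fun i _ => ?_
    ext a b
    simp only [conjTranspose_apply, vecMulVec_apply, Pi.star_apply, star_mul', star_star]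
    ring
  have hQQ : Q * Q = Q := by
    rw [hQdef, Finset.sum_mul_sum]
    have : ∀ i j, vecMulVec (y i) (star (y i)) * vecMulVec (y j) (star (y j))
        = if i = j then vecMulVec (y i) (star (y i)) else 0 := by
      intro i j
      rw [_root_.vecMulVec_mul_vecMulVec, hyy]
      by_cases hij : i = j
      · subst hij
        by_cases h0 : lam i = 0
        · have hz : vecMulVec (0 : n → ℂ) (0 : n → ℂ) = 0 := by
            ext a b; simp [vecMulVec_apply]
          simp [h0, hy0 i h0, hz]
        · simp [h0]
      · simp [hij]
    simp only [this]
    simp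
  -- trace bound
  have htrQ : (ρ * Q).trace = ∑ i, dotProduct (star (y i)) (ρ *ᵥ y i) := by
    rw [hQdef, Finset.mul_sum, trace_sum]
    exact Finset.sum_congr rfl fun i _ => trace_mul_vecMulVec _ _
  have hbound : ((ρ * Q).trace).re ≤ 1 := by
    set B := (1 - Q) * R with hBdef
    have hBH : Bᴴ = R * (1 - Q) := by
      rw [hBdef, conjTranspose_mul, hRH, conjTranspose_sub, conjTranspose_one, hQH]
    have h1Q : (1 - Q) * (1 - Q) = 1 - Q := by
      rw [sub_mul, one_mul, mul_sub, mul_one, hQQ]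
      simp
    have hBB : Bᴴ * B = ρ - R * Q * R := by
      rw [hBH, hBdef, mul_assoc, ← mul_assoc (1-Q) (1-Q) R, h1Q, sub_mul, one_mul, mul_sub,
        hRR, ← mul_assoc]
    have htrB := trace_conjTranspose_mul_self_re_nonneg B
    rw [hBB, trace_sub] at htrB
    have hcyc : (R * Q * R).trace = (ρ * Q).trace := by
      rw [trace_mul_cycle, hRR]
    rw [hcyc] at htrB
    have : ((ρ * Q).trace).re ≤ (ρ.trace).re := by
      have := htrB
      simp only [Complex.sub_re] at this
      linarith
    rw [hρ.2] at this
    simpa using this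
  -- Cauchy-Schwarz assembly
  set a : n × n → ℂ := fun p => (R *ᵥ y p.1) p.2 with hadef
  set b : n × n → ℂ := fun p => (S *ᵥ u p.1) p.2 with hbdef
  have hab : dotProduct (star a) b
      = ∑ i, dotProduct (star (R *ᵥ y i)) (S *ᵥ u i) := by
    simp [dotProduct, Fintype.sum_prod_type, hadef, hbdef]
  have haa : dotProduct (star a) a = (ρ * Q).trace := by
    have : dotProduct (star a) a
        = ∑ i, dotProduct (star (R *ᵥ y i)) (R *ᵥ y i) := by
      simp [dotProduct, Fintype.sum_prod_type, hadef]
    rw [this, htrQ]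
    refine Finset.sum_congr rfl fun i _ => ?_
    rw [dot_shift, hRH, hRR]
  have hbb : dotProduct (star b) b = σ.trace := by
    have : dotProduct (star b) b
        = ∑ i, dotProduct (star (S *ᵥ u i)) (S *ᵥ u i) := by
      simp [dotProduct, Fintype.sum_prod_type, hbdef]
    rw [this, ← htr σ]
    refine Finset.sum_congr rfl fun i _ => ?_
    rw [dot_shift, hSH, hSS]
  have hfid2 : fidelity ρ σ = (dotProduct (star a) b).re := by
    rw [hab, hfid, trace_psd_sqrt hM]
    have : ∀ i, dotProduct (star (R *ᵥ y i)) (S *ᵥ u i)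
        = (Real.sqrt (lam i) : ℂ) := by
      intro i
      rw [dot_shift, hRH]
      exact hyw i
    simp only [this]
    rfl
  have hcs := cs_dot a b
  rw [haa, hbb, hσ.2] at hcs
  rw [hfid2]
  calc (dotProduct (star a) b).re
      ≤ Real.sqrt (((ρ * Q).trace).re) * Real.sqrt ((1 : ℂ).re) := hcs
    _ ≤ 1 := by
        rw [show Real.sqrt ((1:ℂ).re) = 1 from by simp, mul_one]
        exact Real.sqrt_le_one.mpr hbound

-- PSD of A ⊗ vecMulVec w (star w)
lemma psd_kron_vec {A : Matrix d d ℂ} (hA : A.PosSemidef) (wv : n → ℂ) :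
    (A ⊗ₖ vecMulVec wv (star wv)).PosSemidef := by
  rw [Matrix.posSemidef_iff_dotProduct_mulVec]
  constructor
  · ext ⟨i, k⟩ ⟨j, l⟩
    simp only [conjTranspose_apply, kroneckerMap_apply, vecMulVec_apply, Pi.star_apply,
      star_mul', star_star]
    have hAij : star (A j i) = A i j := by rw [← conjTranspose_apply, hA.1]
    rw [hAij]
    ring
  · intro x
    set u : d → ℂ := fun j => ∑ l, star (wv l) * x (j, l) with hu
    have heq : dotProduct (star x) ((A ⊗ₖ vecMulVec wv (star wv)) *ᵥ x)
        = dotProduct (star u) (A *ᵥ u) := by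
      simp only [dotProduct, mulVec, Pi.star_apply, Fintype.sum_prod_type,
        kroneckerMap_apply, vecMulVec_apply, hu, dotProduct]
      simp only [Finset.mul_sum, Finset.sum_mul, star_sum, star_mul', star_star]
      refine Finset.sum_congr rfl fun i _ => ?_
      rw [Finset.sum_comm]
      refine Finset.sum_congr rfl fun j _ => ?_
      rw [Finset.sum_comm]
      refine Finset.sum_congr rfl fun l _ => ?_
      refine Finset.sum_congr rfl fun k _ => ?_
      ring
    rw [heq]
    exact hA.dotProduct_mulVec_nonneg u

lemma vecMulVec_mul_vecMulVec' (a b c dd : n → ℂ) :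
    vecMulVec a (star b) * vecMulVec c (star dd)
      = (dotProduct (star b) c) • vecMulVec a (star dd) := by
  ext x z
  simp only [mul_apply, vecMulVec_apply, Matrix.smul_apply, dotProduct, smul_eq_mul,
    Finset.sum_mul, Pi.star_apply]
  congr 1; ext yy
  ring

lemma psd_sum {A : J → Matrix d d ℂ} (hA : ∀ j, (A j).PosSemidef) :
    (∑ j, A j).PosSemidef := by
  classical
  refine Finset.sum_induction A Matrix.PosSemidef (fun a b ha hb => ha.add hb)
    Matrix.PosSemidef.zero (fun j _ => hA j)

section blocks
variable (v : J → n → ℂ)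
  (honb : ∀ j j', dotProduct (star (v j)) (v j') = if j = j' then 1 else 0)

include honb

lemma P_mul_P (j k : J) :
    vecMulVec (v j) (star (v j)) * vecMulVec (v k) (star (v k))
      = if j = k then vecMulVec (v j) (star (v j)) else 0 := by
  rw [vecMulVec_mul_vecMulVec', honb]
  by_cases h : j = k
  · subst h; simp
  · simp [h]

lemma kron_sum_mul (B C : J → Matrix d d ℂ) :
    (∑ j, B j ⊗ₖ vecMulVec (v j) (star (v j))) * (∑ k, C k ⊗ₖ vecMulVec (v k) (star (v k)))
      = ∑ j, (B j * C j) ⊗ₖ vecMulVec (v j) (star (v j)) := by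
  rw [Finset.sum_mul_sum]
  have : ∀ j k, (B j ⊗ₖ vecMulVec (v j) (star (v j))) * (C k ⊗ₖ vecMulVec (v k) (star (v k)))
      = if j = k then (B j * C k) ⊗ₖ vecMulVec (v j) (star (v j)) else 0 := by
    intro j k
    rw [← mul_kronecker_mul, P_mul_P v honb]
    by_cases h : j = k
    · simp [h]
    · simp [h]
  simp only [this]
  simp

lemma matSqrt_blockSum (A : J → Matrix d d ℂ) (hA : ∀ j, (A j).PosSemidef) :
    matSqrt (∑ j, A j ⊗ₖ vecMulVec (v j) (star (v j)))
      = ∑ j, matSqrt (A j) ⊗ₖ vecMulVec (v j) (star (v j)) := by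
  have hR : (∑ j, matSqrt (A j) ⊗ₖ vecMulVec (v j) (star (v j))).PosSemidef :=
    psd_sum (fun j => psd_kron_vec (matSqrt_posSemidef (hA j)) (v j))
  have hL : (∑ j, A j ⊗ₖ vecMulVec (v j) (star (v j))).PosSemidef :=
    psd_sum (fun j => psd_kron_vec (hA j) (v j))
  have hsq : (∑ j, matSqrt (A j) ⊗ₖ vecMulVec (v j) (star (v j))) ^ 2
      = ∑ j, A j ⊗ₖ vecMulVec (v j) (star (v j)) := by
    rw [pow_two, kron_sum_mul v honb]
    exact Finset.sum_congr rfl fun j _ => by rw [matSqrt_mul_self (hA j)]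
  rw [matSqrt_eq hL]
  exact (hR.eq_sqrt_of_sq_eq hL hsq).symm

end blocks

lemma trace_kron_vec (A : Matrix d d ℂ) (wv : n → ℂ)
    (hw : dotProduct (star wv) wv = 1) :
    (A ⊗ₖ vecMulVec wv (star wv)).trace = A.trace := by
  rw [trace_kronecker]
  have : (vecMulVec wv (star wv)).trace = 1 := by
    rw [← hw]
    simp only [Matrix.trace, Matrix.diag, vecMulVec_apply, dotProduct, Pi.star_apply]
    exact Finset.sum_congr rfl fun k _ => mul_comm _ _
  rw [this, mul_one]

lemma psd_smul {A : Matrix d d ℂ} (hA : A.PosSemidef) {c : ℝ} (hc : 0 ≤ c) :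
    ((c : ℂ) • A).PosSemidef := by
  rw [Matrix.posSemidef_iff_dotProduct_mulVec]
  constructor
  · have h1 : ((c : ℂ) • A)ᴴ = (starRingEnd ℂ) (c : ℂ) • Aᴴ := conjTranspose_smul _ _
    rw [Matrix.IsHermitian, h1, hA.1, Complex.conj_ofReal]
  · intro x
    rw [smul_mulVec, dotProduct_smul, smul_eq_mul]
    exact mul_nonneg (by exact_mod_cast Complex.zero_le_real.mpr hc) (hA.dotProduct_mulVec_nonneg x)

lemma matSqrt_smul {A : Matrix d d ℂ} (hA : A.PosSemidef) {c : ℝ} (hc : 0 ≤ c) :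
    matSqrt (((c^2 : ℝ) : ℂ) • A) = ((c : ℝ) : ℂ) • matSqrt A := by
  have hA2 : (((c^2 : ℝ) : ℂ) • A).PosSemidef := psd_smul hA (sq_nonneg c)
  have hcs : (((c : ℝ) : ℂ) • matSqrt A).PosSemidef := psd_smul (matSqrt_posSemidef hA) hc
  have hsq : (((c : ℝ) : ℂ) • matSqrt A) ^ 2 = ((c^2 : ℝ) : ℂ) • A := by
    rw [pow_two, smul_mul_smul_comm, matSqrt_mul_self hA]
    norm_cast
    rw [pow_two]
  rw [matSqrt_eq hA2]
  exact (hcs.eq_sqrt_of_sq_eq hA2 hsq).symm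

end
end helpers

/-- purified distance of block-diagonal (classically flagged) states. -/
theorem statement_13
    {dS m J : Type*} [Fintype dS] [DecidableEq dS] [Fintype m] [DecidableEq m]
    [Fintype J] [DecidableEq J]
    (ρ σ : J → Matrix dS dS ℂ) (hρ : ∀ j, IsState (ρ j)) (hσ : ∀ j, IsState (σ j))
    (q : J → ℝ) (hq : ∀ j, 0 ≤ q j) (hqsum : ∑ j, q j = 1)
    (v : J → m → ℂ)
    (honb : ∀ j j', dotProduct (star (v j)) (v j') = if j = j' then 1 else 0)
    (hbasis : Fintype.card m = Fintype.card J) :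
    (purifiedDist (∑ j, (q j : ℂ) • (ρ j ⊗ₖ Matrix.vecMulVec (v j) (star (v j))))
        (∑ j, (q j : ℂ) • (σ j ⊗ₖ Matrix.vecMulVec (v j) (star (v j))))) ^ 2
      ≥ ∑ j, q j * (purifiedDist (ρ j) (σ j)) ^ 2 := by
  classical
  set P : J → Matrix m m ℂ := fun j => vecMulVec (v j) (star (v j)) with hP
  set F : J → ℝ := fun j => fidelity (ρ j) (σ j) with hF
  have hF0 : ∀ j, 0 ≤ F j := fun j => fidelity_nonneg (hρ j).1 (hσ j).1
  have hF1 : ∀ j, F j ≤ 1 := fun j => fidelity_le_one (hρ j) (hσ j)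
  have hMρ : (∑ j, (q j : ℂ) • (ρ j ⊗ₖ P j)) = ∑ j, ((q j : ℂ) • ρ j) ⊗ₖ P j :=
    Finset.sum_congr rfl fun j _ => by rw [smul_kronecker]
  have hMσ : (∑ j, (q j : ℂ) • (σ j ⊗ₖ P j)) = ∑ j, ((q j : ℂ) • σ j) ⊗ₖ P j :=
    Finset.sum_congr rfl fun j _ => by rw [smul_kronecker]
  have hAσ : ∀ j, (((q j : ℂ)) • σ j).PosSemidef := fun j => psd_smul (hσ j).1 (hq j)
  have hAρ : ∀ j, (((q j : ℂ)) • ρ j).PosSemidef := fun j => psd_smul (hρ j).1 (hq j)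
  set D : J → Matrix dS dS ℂ := fun j =>
    matSqrt ((q j : ℂ) • σ j) * ((q j : ℂ) • ρ j) * matSqrt ((q j : ℂ) • σ j) with hD
  have hDpsd : ∀ j, (D j).PosSemidef := fun j =>
    psd_sandwich (hAρ j) _ (matSqrt_herm (hAσ j))
  have hDj : ∀ j, matSqrt (D j) = (q j : ℂ) • matSqrt (matSqrt (σ j) * ρ j * matSqrt (σ j)) := by
    intro j
    have hsq : matSqrt ((q j : ℂ) • σ j)
        = ((Real.sqrt (q j) : ℝ) : ℂ) • matSqrt (σ j) := by
      rw [show ((q j : ℝ) : ℂ) = (((Real.sqrt (q j))^2 : ℝ) : ℂ) by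
        rw [Real.sq_sqrt (hq j)]]
      exact matSqrt_smul (hσ j).1 (Real.sqrt_nonneg _)
    have hDval : D j = (((q j)^2 : ℝ) : ℂ) • (matSqrt (σ j) * ρ j * matSqrt (σ j)) := by
      rw [hD]
      simp only [hsq, Algebra.smul_mul_assoc, Algebra.mul_smul_comm, smul_smul]
      congr 1
      push_cast
      rw [show (Real.sqrt (q j) : ℂ) * ((q j : ℂ) * (Real.sqrt (q j) : ℂ))
          = ((Real.sqrt (q j) : ℂ) * (Real.sqrt (q j) : ℂ)) * (q j : ℂ) by ring]
      rw [← Complex.ofReal_mul, Real.mul_self_sqrt (hq j)]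
      ring
    rw [hDval]
    exact matSqrt_smul (psd_sandwich (hρ j).1 _ (matSqrt_herm (hσ j).1)) (hq j)
  have hfidblock : fidelity (∑ j, (q j : ℂ) • (ρ j ⊗ₖ P j)) (∑ j, (q j : ℂ) • (σ j ⊗ₖ P j))
      = ∑ j, q j * F j := by
    rw [hMρ, hMσ, fidelity, matSqrt_blockSum v honb _ hAσ, kron_sum_mul v honb,
      kron_sum_mul v honb, matSqrt_blockSum v honb _ hDpsd, trace_sum]
    rw [Complex.re_sum]
    refine Finset.sum_congr rfl fun j _ => ?_
    rw [trace_kron_vec _ _ (by rw [honb j j]; simp), hDj j, trace_smul, smul_eq_mul,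
      Complex.re_ofReal_mul]
    rfl
  set Fb : ℝ := ∑ j, q j * F j with hFb
  have hFb0 : 0 ≤ Fb := Finset.sum_nonneg fun j _ => mul_nonneg (hq j) (hF0 j)
  have hFb1 : Fb ≤ 1 := by
    rw [hFb, ← hqsum]
    exact Finset.sum_le_sum fun j _ => mul_le_of_le_one_right (hq j) (hF1 j)
  have hLHS : (purifiedDist (∑ j, (q j : ℂ) • (ρ j ⊗ₖ P j))
      (∑ j, (q j : ℂ) • (σ j ⊗ₖ P j))) ^ 2 = 1 - Fb ^ 2 := by
    rw [purifiedDist, hfidblock, Real.sq_sqrt (by nlinarith)]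
  have hRHS : ∀ j, q j * (purifiedDist (ρ j) (σ j)) ^ 2 = q j * (1 - (F j) ^ 2) := by
    intro j
    rw [purifiedDist, Real.sq_sqrt (by nlinarith [hF0 j, hF1 j])]
  rw [ge_iff_le, hLHS]
  simp only [hRHS]
  have hCS : Fb ^ 2 ≤ ∑ j, q j * (F j) ^ 2 := by
    have h := Finset.sum_mul_sq_le_sq_mul_sq Finset.univ
      (fun j => Real.sqrt (q j)) (fun j => Real.sqrt (q j) * F j)
    have e1 : ∀ j, Real.sqrt (q j) * (Real.sqrt (q j) * F j) = q j * F j := by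
      intro j
      rw [← mul_assoc, Real.mul_self_sqrt (hq j)]
    have e2 : ∀ j, Real.sqrt (q j) ^ 2 = q j := fun j => Real.sq_sqrt (hq j)
    have e3 : ∀ j, (Real.sqrt (q j) * F j) ^ 2 = q j * (F j) ^ 2 := by
      intro j
      rw [mul_pow, Real.sq_sqrt (hq j)]
    simp only [e1, e2, e3] at h
    rw [hqsum, one_mul] at h
    exact h
  have hsplit : ∑ j, q j * (1 - (F j) ^ 2) = 1 - ∑ j, q j * (F j) ^ 2 := by
    simp only [mul_sub, mul_one]
    rw [Finset.sum_sub_distrib, hqsum]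
  rw [hsplit]
  linarith
end
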